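/- Let {(σ_n, v_n, u_n)}_{n∈ℕ} be a singular system for the compact linear operator K : X → Y such that (u_n) spans the closure of the range of K and (v_n) spans the closure of the range of K*. Let δ > 0, E > 0, c > 0, d₁ > 0, d₂ > 0, and set α = c (δ/E)^{1/2}. Suppose x = K* K z with ‖z‖ ≤ E, y^δ ∈ Y with ‖y^δ − K x‖ ≤ δ, that (d₁/α) σ_n ≥ 1 for every n with |σ_n ⟨y^δ, u_n⟩| > α/2 or |σ_n ⟨K x, u_n⟩| > α/2, and that σ_n² ≤ d₂ α for all n. Then the ℓ¹-SVD reconstruction x^{α,δ} := ∑_n (1/σ_n²) S_α(σ_n ⟨y^δ, u_n⟩) v_n satisfies ‖x^{α,δ} − x‖ ≤ (d₁/c + d₂ c) δ^{1/2} E^{1/2}. -/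

import Mathlib

open scoped InnerProductSpace ENNReal NNReal

noncomputable def softThresh (α t : ℝ) : ℝ :=
  if t ≤ -(α / 2) then t + α / 2
  else if α / 2 ≤ t then t - α / 2
  else 0

lemma softThresh_lipschitz {α : ℝ} (hα : 0 ≤ α) (s t : ℝ) :
    |softThresh α s - softThresh α t| ≤ |s - t| := by
  unfold softThresh
  rcases abs_cases (s - t) with ⟨h1, h2⟩ | ⟨h1, h2⟩ <;>
    split_ifs <;> rw [abs_le] <;> constructor <;> linarith

lemma softThresh_sub_self {α : ℝ} (hα : 0 ≤ α) (t : ℝ) :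
    |softThresh α t - t| ≤ |t| := by
  unfold softThresh
  rcases abs_cases t with ⟨h1, h2⟩ | ⟨h1, h2⟩ <;>
    split_ifs <;> rw [abs_le] <;> constructor <;> linarith

lemma softThresh_eq_zero {α t : ℝ} (h : |t| ≤ α / 2) : softThresh α t = 0 := by
  rcases abs_le.mp h with ⟨h1, h2⟩
  unfold softThresh
  split_ifs <;> linarith

-- orthonormal family with l² coefficients: sum exists in closure of span, with norm = l² norm
-- we do everything through a Hilbert basis of the closure of the span.

set_option maxHeartbeats 1000000 in
/-- Error estimate for the `ℓ¹`-SVD method with the a priori choice `α = c (δ/E)^{1/2}`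
under the source condition `x = K* K z`, `‖z‖ ≤ E`:
`‖x^{α,δ} − x‖ ≤ (d₁/c + d₂ c) δ^{1/2} E^{1/2}`. -/
theorem l1SVD_rate_one_half {X Y : Type*}
    [NormedAddCommGroup X] [InnerProductSpace ℝ X] [CompleteSpace X]
    [NormedAddCommGroup Y] [InnerProductSpace ℝ Y] [CompleteSpace Y]
    (K : X →L[ℝ] Y) (hK : IsCompactOperator K)
    (σ : ℕ → ℝ) (v : ℕ → X) (u : ℕ → Y)
    (hσ : ∀ n, 0 < σ n) (hv : Orthonormal ℝ v) (hu : Orthonormal ℝ u)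
    (hKv : ∀ n, K (v n) = σ n • u n)
    (hKadj : ∀ n, (ContinuousLinearMap.adjoint K) (u n) = σ n • v n)
    (huspan : (Submodule.span ℝ (Set.range u)).topologicalClosure
      = (LinearMap.range (K : X →ₗ[ℝ] Y)).topologicalClosure)
    (hvspan : (Submodule.span ℝ (Set.range v)).topologicalClosure
      = (LinearMap.range ((ContinuousLinearMap.adjoint K : Y →L[ℝ] X) : Y →ₗ[ℝ] X)).topologicalClosure)
    (δ E c d₁ d₂ : ℝ) (hδ : 0 < δ) (hE : 0 < E) (hc : 0 < c) (hd₁ : 0 < d₁) (hd₂ : 0 < d₂)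
    (α : ℝ) (hαdef : α = c * (δ / E) ^ ((1 : ℝ) / 2))
    (z : X) (hz : ‖z‖ ≤ E) (x : X) (hx : x = ContinuousLinearMap.adjoint K (K z))
    (yδ : Y) (hyδ : ‖yδ - K x‖ ≤ δ)
    (hd₁σ : ∀ n, (α / 2 < |σ n * ⟪yδ, u n⟫_ℝ| ∨ α / 2 < |σ n * ⟪K x, u n⟫_ℝ|)
      → 1 ≤ d₁ / α * σ n)
    (hd₂σ : ∀ n, σ n ^ 2 ≤ d₂ * α) :
    ‖(∑' n, ((σ n ^ 2)⁻¹ * softThresh α (σ n * ⟪yδ, u n⟫_ℝ)) • v n) - x‖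
      ≤ (d₁ / c + d₂ * c) * δ ^ ((1 : ℝ) / 2) * E ^ ((1 : ℝ) / 2) := by
  have hα : 0 < α := by
    rw [hαdef]
    exact mul_pos hc (Real.rpow_pos_of_pos (div_pos hδ hE) _)
  -- final arithmetic
  have hfinal : d₁ / α * δ + d₂ * α * E
      = (d₁ / c + d₂ * c) * δ ^ ((1 : ℝ) / 2) * E ^ ((1 : ℝ) / 2) := by
    have hp : (0 : ℝ) < δ ^ ((1 : ℝ) / 2) := Real.rpow_pos_of_pos hδ _
    have hq : (0 : ℝ) < E ^ ((1 : ℝ) / 2) := Real.rpow_pos_of_pos hE _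
    have hp2 : δ ^ ((1 : ℝ) / 2) * δ ^ ((1 : ℝ) / 2) = δ := by
      rw [← Real.rpow_add hδ]
      norm_num
    have hq2 : E ^ ((1 : ℝ) / 2) * E ^ ((1 : ℝ) / 2) = E := by
      rw [← Real.rpow_add hE]
      norm_num
    have hα' : α = c * δ ^ ((1 : ℝ) / 2) / E ^ ((1 : ℝ) / 2) := by
      rw [hαdef, Real.div_rpow hδ.le hE.le]
      ring
    set p := δ ^ ((1 : ℝ) / 2)
    set q := E ^ ((1 : ℝ) / 2)
    rw [hα', ← hp2, ← hq2]
    field_simp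
  set w : Y := yδ - K x with hw
  -- basic coefficient identities
  have hbx : ∀ n, ⟪K x, u n⟫_ℝ = σ n * ⟪x, v n⟫_ℝ := by
    intro n
    rw [← ContinuousLinearMap.adjoint_inner_right, hKadj n, real_inner_smul_right]
  have hxz : ∀ n, ⟪x, v n⟫_ℝ = σ n ^ 2 * ⟪z, v n⟫_ℝ := by
    intro n
    rw [hx, ContinuousLinearMap.adjoint_inner_left, hKv n, real_inner_smul_right,
      ← ContinuousLinearMap.adjoint_inner_right, hKadj n, real_inner_smul_right]
    ring
  -- coefficients
  set a : ℕ → ℝ := fun n => (σ n ^ 2)⁻¹ * softThresh α (σ n * ⟪yδ, u n⟫_ℝ) with ha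
  set t₁ : ℕ → ℝ := fun n =>
    (σ n ^ 2)⁻¹ * (softThresh α (σ n * ⟪yδ, u n⟫_ℝ) - softThresh α (σ n * ⟪K x, u n⟫_ℝ))
    with ht₁def
  set t₂ : ℕ → ℝ := fun n =>
    (σ n ^ 2)⁻¹ * (softThresh α (σ n * ⟪K x, u n⟫_ℝ) - σ n * ⟪K x, u n⟫_ℝ) with ht₂def
  have hsplit : ∀ n, a n = (t₁ n + t₂ n) + ⟪v n, x⟫_ℝ := by
    intro n
    have hs := (hσ n).ne'
    have : ⟪v n, x⟫_ℝ = (σ n ^ 2)⁻¹ * (σ n * ⟪K x, u n⟫_ℝ) := by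
      rw [hbx n, real_inner_comm]
      field_simp
    rw [this, ha, ht₁def, ht₂def]
    ring
  -- pointwise bounds
  have ht₁ : ∀ n, |t₁ n| ≤ d₁ / α * |⟪u n, w⟫_ℝ| := by
    intro n
    have hs := hσ n
    have hinner : σ n * ⟪yδ, u n⟫_ℝ - σ n * ⟪K x, u n⟫_ℝ = σ n * ⟪u n, w⟫_ℝ := by
      rw [hw, inner_sub_right, real_inner_comm (u n) yδ, real_inner_comm (u n) (K x)]
      ring
    by_cases hcase : |σ n * ⟪yδ, u n⟫_ℝ| ≤ α / 2 ∧ |σ n * ⟪K x, u n⟫_ℝ| ≤ α / 2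
    · have h1 : t₁ n = 0 := by
        simp only [ht₁def, softThresh_eq_zero hcase.1, softThresh_eq_zero hcase.2]
        ring
      rw [h1, abs_zero]
      positivity
    · push_neg at hcase
      have hor : α / 2 < |σ n * ⟪yδ, u n⟫_ℝ| ∨ α / 2 < |σ n * ⟪K x, u n⟫_ℝ| := by
        by_cases h : α / 2 < |σ n * ⟪yδ, u n⟫_ℝ|
        · exact Or.inl h
        · exact Or.inr (hcase (not_lt.mp h))
      have hd := hd₁σ n hor
      have hlin : (σ n)⁻¹ ≤ d₁ / α := by
        rw [inv_le_iff_one_le_mul₀ hs]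
        linarith [hd]
      have hlip := softThresh_lipschitz hα.le (σ n * ⟪yδ, u n⟫_ℝ) (σ n * ⟪K x, u n⟫_ℝ)
      rw [hinner, abs_mul, abs_of_pos hs] at hlip
      calc |t₁ n| = (σ n ^ 2)⁻¹ *
            |softThresh α (σ n * ⟪yδ, u n⟫_ℝ) - softThresh α (σ n * ⟪K x, u n⟫_ℝ)| := by
              rw [ht₁def, abs_mul, abs_inv, abs_of_pos (pow_pos hs 2)]
        _ ≤ (σ n ^ 2)⁻¹ * (σ n * |⟪u n, w⟫_ℝ|) := by
              apply mul_le_mul_of_nonneg_left hlip (by positivity)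
        _ = (σ n)⁻¹ * |⟪u n, w⟫_ℝ| := by
              field_simp
        _ ≤ d₁ / α * |⟪u n, w⟫_ℝ| := mul_le_mul_of_nonneg_right hlin (abs_nonneg _)
  have ht₂ : ∀ n, |t₂ n| ≤ d₂ * α * |⟪v n, z⟫_ℝ| := by
    intro n
    have hs := hσ n
    have hb3 : σ n * ⟪K x, u n⟫_ℝ = σ n ^ 4 * ⟪v n, z⟫_ℝ := by
      rw [hbx n, hxz n, real_inner_comm]
      ring
    have hself : |softThresh α (σ n * ⟪K x, u n⟫_ℝ) - σ n * ⟪K x, u n⟫_ℝ|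
        ≤ σ n ^ 4 * |⟪v n, z⟫_ℝ| := by
      refine (softThresh_sub_self hα.le (σ n * ⟪K x, u n⟫_ℝ)).trans (le_of_eq ?_)
      rw [hb3, abs_mul, abs_of_pos (by positivity : (0:ℝ) < σ n ^ 4)]
    calc |t₂ n| = (σ n ^ 2)⁻¹ *
          |softThresh α (σ n * ⟪K x, u n⟫_ℝ) - σ n * ⟪K x, u n⟫_ℝ| := by
            rw [ht₂def, abs_mul, abs_inv, abs_of_pos (pow_pos hs 2)]
      _ ≤ (σ n ^ 2)⁻¹ * (σ n ^ 4 * |⟪v n, z⟫_ℝ|) :=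
            mul_le_mul_of_nonneg_left hself (by positivity)
      _ = σ n ^ 2 * |⟪v n, z⟫_ℝ| := by
            field_simp
      _ ≤ d₂ * α * |⟪v n, z⟫_ℝ| := mul_le_mul_of_nonneg_right (hd₂σ n) (abs_nonneg _)

  -- squared bounds, summability, Bessel
  have hwsum : Summable fun n => ‖⟪u n, w⟫_ℝ‖ ^ 2 := Orthonormal.inner_products_summable w hu
  have hzsum : Summable fun n => ‖⟪v n, z⟫_ℝ‖ ^ 2 := Orthonormal.inner_products_summable z hv
  have ht₁sq : ∀ n, ‖t₁ n‖ ^ 2 ≤ (d₁ / α) ^ 2 * ‖⟪u n, w⟫_ℝ‖ ^ 2 := by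
    intro n
    calc ‖t₁ n‖ ^ 2 = |t₁ n| ^ 2 := by rw [Real.norm_eq_abs]
      _ ≤ (d₁ / α * |⟪u n, w⟫_ℝ|) ^ 2 := pow_le_pow_left₀ (abs_nonneg _) (ht₁ n) 2
      _ = (d₁ / α) ^ 2 * ‖⟪u n, w⟫_ℝ‖ ^ 2 := by rw [mul_pow, Real.norm_eq_abs]
  have ht₂sq : ∀ n, ‖t₂ n‖ ^ 2 ≤ (d₂ * α) ^ 2 * ‖⟪v n, z⟫_ℝ‖ ^ 2 := by
    intro n
    calc ‖t₂ n‖ ^ 2 = |t₂ n| ^ 2 := by rw [Real.norm_eq_abs]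
      _ ≤ (d₂ * α * |⟪v n, z⟫_ℝ|) ^ 2 := pow_le_pow_left₀ (abs_nonneg _) (ht₂ n) 2
      _ = (d₂ * α) ^ 2 * ‖⟪v n, z⟫_ℝ‖ ^ 2 := by rw [mul_pow, Real.norm_eq_abs]
  have hsum1 : Summable fun n => ‖t₁ n‖ ^ 2 :=
    Summable.of_nonneg_of_le (fun n => by positivity) ht₁sq (hwsum.mul_left _)
  have hsum2 : Summable fun n => ‖t₂ n‖ ^ 2 :=
    Summable.of_nonneg_of_le (fun n => by positivity) ht₂sq (hzsum.mul_left _)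
  have htsum1 : ∑' n, ‖t₁ n‖ ^ 2 ≤ (d₁ / α * δ) ^ 2 := by
    calc ∑' n, ‖t₁ n‖ ^ 2 ≤ ∑' n, (d₁ / α) ^ 2 * ‖⟪u n, w⟫_ℝ‖ ^ 2 :=
          Summable.tsum_le_tsum ht₁sq hsum1 (hwsum.mul_left _)
      _ = (d₁ / α) ^ 2 * ∑' n, ‖⟪u n, w⟫_ℝ‖ ^ 2 := tsum_mul_left
      _ ≤ (d₁ / α) ^ 2 * δ ^ 2 := by
          refine mul_le_mul_of_nonneg_left ?_ (by positivity)
          exact (Orthonormal.tsum_inner_products_le w hu).trans (pow_le_pow_left₀ (norm_nonneg _) hyδ 2)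
      _ = (d₁ / α * δ) ^ 2 := by ring
  have htsum2 : ∑' n, ‖t₂ n‖ ^ 2 ≤ (d₂ * α * E) ^ 2 := by
    calc ∑' n, ‖t₂ n‖ ^ 2 ≤ ∑' n, (d₂ * α) ^ 2 * ‖⟪v n, z⟫_ℝ‖ ^ 2 :=
          Summable.tsum_le_tsum ht₂sq hsum2 (hzsum.mul_left _)
      _ = (d₂ * α) ^ 2 * ∑' n, ‖⟪v n, z⟫_ℝ‖ ^ 2 := tsum_mul_left
      _ ≤ (d₂ * α) ^ 2 * E ^ 2 := by
          refine mul_le_mul_of_nonneg_left ?_ (by positivity)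
          exact (Orthonormal.tsum_inner_products_le z hv).trans (pow_le_pow_left₀ (norm_nonneg _) hz 2)
      _ = (d₂ * α * E) ^ 2 := by ring
  -- lp elements
  have hrp : ∀ r : ℝ, r ^ (2 : ℝ≥0∞).toReal = r ^ 2 := fun r => by
    rw [show ((2 : ℝ≥0∞)).toReal = ((2 : ℕ) : ℝ) by simp, Real.rpow_natCast]
  have h2pos : (0 : ℝ) < (2 : ℝ≥0∞).toReal := by simp
  have mem1 : Memℓp t₁ 2 := memℓp_gen (by simpa only [hrp] using hsum1)
  have mem2 : Memℓp t₂ 2 := memℓp_gen (by simpa only [hrp] using hsum2)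
  set f₁ : lp (fun _ : ℕ => ℝ) 2 := ⟨t₁, mem1⟩ with hf₁def
  set f₂ : lp (fun _ : ℕ => ℝ) 2 := ⟨t₂, mem2⟩ with hf₂def
  have hf₁ : ‖f₁‖ ≤ d₁ / α * δ := by
    have hn := lp.norm_rpow_eq_tsum h2pos f₁
    simp only [hrp] at hn
    rw [show (fun n => ‖(f₁ : ∀ _ : ℕ, ℝ) n‖ ^ 2) = fun n => ‖t₁ n‖ ^ 2 from rfl] at hn
    have h0 : (0 : ℝ) ≤ d₁ / α * δ := by positivity
    nlinarith [norm_nonneg f₁, htsum1, hn]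
  have hf₂ : ‖f₂‖ ≤ d₂ * α * E := by
    have hn := lp.norm_rpow_eq_tsum h2pos f₂
    simp only [hrp] at hn
    rw [show (fun n => ‖(f₂ : ∀ _ : ℕ, ℝ) n‖ ^ 2) = fun n => ‖t₂ n‖ ^ 2 from rfl] at hn
    have h0 : (0 : ℝ) ≤ d₂ * α * E := by positivity
    nlinarith [norm_nonneg f₂, htsum2, hn]
  set f : lp (fun _ : ℕ => ℝ) 2 := f₁ + f₂ with hfdef
  have hfn : ∀ n, (f : ∀ _ : ℕ, ℝ) n = t₁ n + t₂ n := by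
    intro n
    rw [hfdef, lp.coeFn_add]
    rfl
  have hf : ‖f‖ ≤ d₁ / α * δ + d₂ * α * E :=
    (norm_add_le _ _).trans (add_le_add hf₁ hf₂)
  -- Hilbert basis of the closure of the span of v
  set V := (Submodule.span ℝ (Set.range v)).topologicalClosure with hVdef
  haveI : CompleteSpace V := (Submodule.isClosed_topologicalClosure _).completeSpace_coe
  have hvV : ∀ n, v n ∈ V := fun n =>
    Submodule.le_topologicalClosure _ (Submodule.subset_span (Set.mem_range_self n))
  set v' : ℕ → V := fun n => ⟨v n, hvV n⟩ with hv'def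
  have hv' : Orthonormal ℝ v' := hv.codRestrict _ hvV
  have hsp : ⊤ ≤ (Submodule.span ℝ (Set.range v')).topologicalClosure := by
    rintro ξ -
    have h1 : (ξ : X) ∈ closure ((Submodule.span ℝ (Set.range v) : Set X)) := by
      rw [← Submodule.topologicalClosure_coe]
      exact ξ.2
    have himg : Subtype.val '' ((Submodule.span ℝ (Set.range v') : Set V))
        = ((Submodule.span ℝ (Set.range v) : Set X)) := by
      rw [show (Subtype.val : V → X) = ⇑V.subtype from rfl,
        ← Submodule.map_coe V.subtype, Submodule.map_span, ← Set.range_comp]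
      rfl
    rw [← SetLike.mem_coe, Submodule.topologicalClosure_coe, closure_subtype, himg]
    exact h1
  set b : HilbertBasis ℕ ℝ V := HilbertBasis.mk hv' hsp with hbdef
  have hb : ⇑b = v' := HilbertBasis.coe_mk _ _
  have hxV : x ∈ V := by
    have hmem : x ∈ LinearMap.range ((ContinuousLinearMap.adjoint K : Y →L[ℝ] X) : Y →ₗ[ℝ] X) := ⟨K z, hx.symm⟩
    rw [hvspan]
    exact Submodule.le_topologicalClosure _ hmem
  -- expansion of x
  have hxsum : HasSum (fun n => ⟪v n, x⟫_ℝ • v n) x := by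
    have h2 := (b.hasSum_repr ⟨x, hxV⟩).mapL V.subtypeL
    have hfun : (fun n => V.subtypeL ((b.repr ⟨x, hxV⟩ n) • b n))
        = fun n => ⟪v n, x⟫_ℝ • v n := by
      funext n
      rw [map_smul, b.repr_apply_apply, hb]
      rfl
    rw [hfun] at h2
    exact h2
  -- the correction vector
  have hssum : HasSum (fun n => (t₁ n + t₂ n) • v n) (V.subtypeL (b.repr.symm f)) := by
    have h2 := (b.hasSum_repr_symm f).mapL V.subtypeL
    have hfun : (fun n => V.subtypeL (f n • b n)) = fun n => (t₁ n + t₂ n) • v n := by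
      funext n
      rw [map_smul, hb, hfn n]
      rfl
    rw [hfun] at h2
    exact h2
  have hnorms : ‖V.subtypeL (b.repr.symm f)‖ = ‖f‖ := by
    have h1 : ‖V.subtypeL (b.repr.symm f)‖ = ‖b.repr.symm f‖ := rfl
    rw [h1, LinearIsometryEquiv.norm_map]
  -- combine
  have hasum : HasSum (fun n => a n • v n) (V.subtypeL (b.repr.symm f) + x) := by
    have h := hssum.add hxsum
    have hfun : (fun n => (t₁ n + t₂ n) • v n + ⟪v n, x⟫_ℝ • v n)
        = fun n => a n • v n := by
      funext n
      rw [hsplit n]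
      module
    rw [hfun] at h
    exact h
  have hteq : (∑' n, ((σ n ^ 2)⁻¹ * softThresh α (σ n * ⟪yδ, u n⟫_ℝ)) • v n)
      = V.subtypeL (b.repr.symm f) + x := hasum.tsum_eq
  rw [hteq, add_sub_cancel_right, hnorms]
  exact hf.trans_eq hfinal
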